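/- Fix n ≥ 3 and consider intervals modulo n (sets of consecutive residues in Z/nZ). If Ĥ is a family of such intervals not containing ∅ or the full set Z/nZ, and Ĥ contains no four distinct members A, B, C, D with A ∪ B ⊆ C ∩ D, then |Ĥ| ≤ 2n. -/

import Mathlib

open Finset

/-- `S` is an interval of consecutive residues modulo `n`. -/
def IsCyclicInterval (n : ℕ) (S : Finset (ZMod n)) : Prop :=
  ∃ k : ZMod n, ∃ m : ℕ, S = (Finset.range m).image (fun i : ℕ => k + (i : ZMod n))

/-- The arc of length `m` starting at `k`. -/
def arcSet (n : ℕ) [NeZero n] (k : ZMod n) (m : ℕ) : Finset (ZMod n) :=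
  Finset.univ.filter (fun x => (x - k).val < m)

lemma mem_arcSet {n : ℕ} [NeZero n] {k x : ZMod n} {m : ℕ} :
    x ∈ arcSet n k m ↔ (x - k).val < m := by simp [arcSet]

lemma arcSet_mono {n : ℕ} [NeZero n] (k : ZMod n) {m m' : ℕ} (h : m ≤ m') :
    arcSet n k m ⊆ arcSet n k m' :=
  fun x hx => mem_arcSet.2 (lt_of_lt_of_le (mem_arcSet.1 hx) h)

lemma arcSet_subset_end {n : ℕ} [NeZero n] {k k' : ZMod n} {s s' : ℕ}
    (hs : 1 ≤ s) (hs' : s' ≤ n) (hss : s ≤ s')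
    (hend : k + ((s - 1 : ℕ) : ZMod n) = k' + ((s' - 1 : ℕ) : ZMod n)) :
    arcSet n k s ⊆ arcSet n k' s' := by
  have hn1 : 1 ≤ n := Nat.one_le_iff_ne_zero.mpr (NeZero.ne n)
  intro y hy
  rw [mem_arcSet] at hy ⊢
  have h1 : ((s' - 1 : ℕ) : ZMod n) = ((s - 1 : ℕ) : ZMod n) + ((s' - s : ℕ) : ZMod n) := by
    rw [← Nat.cast_add]; congr 1; omega
  have hkk : y - k' = (y - k) + ((s' - s : ℕ) : ZMod n) := by
    rw [h1] at hend; linear_combination hend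
  rw [hkk, ZMod.val_add, ZMod.val_natCast]
  have h2 : (s' - s) % n = s' - s := Nat.mod_eq_of_lt (by omega)
  rw [h2, Nat.mod_eq_of_lt (by omega)]
  omega

lemma image_range_eq_arcSet {n : ℕ} [NeZero n] (k : ZMod n) {m : ℕ} (hm : m ≤ n) :
    (Finset.range m).image (fun i : ℕ => k + (i : ZMod n)) = arcSet n k m := by
  ext x
  simp only [mem_image, mem_range, mem_arcSet]
  constructor
  · rintro ⟨i, hi, rfl⟩
    have : (k + (i : ZMod n)) - k = (i : ZMod n) := by ring
    rw [this, ZMod.val_natCast, Nat.mod_eq_of_lt (by omega)]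
    exact hi
  · intro hx
    refine ⟨(x - k).val, hx, ?_⟩
    have : ((x - k).val : ZMod n) = x - k := by simp [ZMod.natCast_val, ZMod.cast_id]
    rw [this]; ring

lemma arcSet_univ {n : ℕ} [NeZero n] (k : ZMod n) : arcSet n k n = Finset.univ := by
  ext x; simp [mem_arcSet, ZMod.val_lt]

lemma cyclic_eq_arcSet {n : ℕ} [NeZero n] {S : Finset (ZMod n)} (h : IsCyclicInterval n S)
    (hne : S ≠ ∅) (hfu : S ≠ Finset.univ) :
    ∃ k, S = arcSet n k S.card ∧ 1 ≤ S.card ∧ S.card ≤ n - 1 := by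
  have hn1 : 1 ≤ n := Nat.one_le_iff_ne_zero.mpr (NeZero.ne n)
  obtain ⟨k, m, rfl⟩ := h
  set S := (Finset.range m).image (fun i : ℕ => k + (i : ZMod n)) with hS
  by_cases hm : m ≤ n
  · have heq : S = arcSet n k m := image_range_eq_arcSet k hm
    have hm0 : m ≠ 0 := by
      rintro rfl; exact hne (by simp [hS])
    have hmn : m ≠ n := by
      rintro rfl; exact hfu (heq.trans (arcSet_univ k))
    have hcard : S.card = m := by
      rw [hS, Finset.card_image_of_injOn, Finset.card_range]
      intro i hi j hj hij
      simp only [Finset.coe_range, Set.mem_Iio] at hi hj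
      have : (i : ZMod n) = (j : ZMod n) := by
        have := hij; simpa using this
      have := congrArg ZMod.val this
      rwa [ZMod.val_natCast, ZMod.val_natCast, Nat.mod_eq_of_lt (by omega),
        Nat.mod_eq_of_lt (by omega)] at this
    exact ⟨k, by rw [hcard]; exact heq, by omega, by omega⟩
  · exfalso
    apply hfu
    apply Finset.univ_subset_iff.1
    rw [← arcSet_univ k, ← image_range_eq_arcSet k le_rfl, hS]
    exact Finset.image_subset_image (Finset.range_subset_range.2 (by omega))

noncomputable def lend {n : ℕ} [NeZero n] (S : Finset (ZMod n)) : ZMod n :=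
  if h : ∃ k, S = arcSet n k S.card then h.choose else 0

lemma lend_spec {n : ℕ} [NeZero n] {S : Finset (ZMod n)} (h : ∃ k, S = arcSet n k S.card) :
    S = arcSet n (lend S) S.card := by
  rw [lend, dif_pos h]; exact h.choose_spec

lemma exists_sorted3 {α : Type*} [DecidableEq α] {F : Finset α} {f : α → ℕ}
    (hinj : ∀ a ∈ F, ∀ b ∈ F, f a = f b → a = b) (h : 3 ≤ F.card) :
    ∃ a b c, a ∈ F ∧ b ∈ F ∧ c ∈ F ∧ f a < f b ∧ f b < f c := by
  set N := F.image f with hN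
  have hcard : N.card = F.card := Finset.card_image_of_injOn (fun a ha b hb => hinj a ha b hb)
  have hN3 : 3 ≤ N.card := hcard ▸ h
  have hNne : N.Nonempty := Finset.card_pos.1 (by omega)
  set c3 := N.max' hNne with hc3
  set N2 := N.erase c3 with hN2
  have hN2card : N2.card = N.card - 1 := Finset.card_erase_of_mem (N.max'_mem hNne)
  have hN2ne : N2.Nonempty := Finset.card_pos.1 (by omega)
  set c2 := N2.max' hN2ne with hc2
  set N1 := N2.erase c2 with hN1
  have hN1card : N1.card = N2.card - 1 := Finset.card_erase_of_mem (N2.max'_mem hN2ne)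
  have hN1ne : N1.Nonempty := Finset.card_pos.1 (by omega)
  obtain ⟨c1, hc1⟩ := hN1ne
  have hc1N2 : c1 ∈ N2 := Finset.mem_of_mem_erase hc1
  have hc1N : c1 ∈ N := Finset.mem_of_mem_erase hc1N2
  have hc2N : c2 ∈ N := Finset.mem_of_mem_erase (N2.max'_mem hN2ne)
  have h12 : c1 < c2 :=
    lt_of_le_of_ne (N2.le_max' c1 hc1N2) (Finset.ne_of_mem_erase hc1)
  have h23 : c2 < c3 :=
    lt_of_le_of_ne (N.le_max' c2 hc2N) (Finset.ne_of_mem_erase (N2.max'_mem hN2ne))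
  obtain ⟨a, haF, hfa⟩ := Finset.mem_image.1 hc1N
  obtain ⟨b, hbF, hfb⟩ := Finset.mem_image.1 hc2N
  obtain ⟨c, hcF, hfc⟩ := Finset.mem_image.1 (N.max'_mem hNne)
  exact ⟨a, b, c, haF, hbF, hcF, by omega, by omega⟩

lemma exists_sorted4 {α : Type*} [DecidableEq α] {F : Finset α} {f : α → ℕ}
    (hinj : ∀ a ∈ F, ∀ b ∈ F, f a = f b → a = b) (h : 4 ≤ F.card) :
    ∃ a b c d, a ∈ F ∧ b ∈ F ∧ c ∈ F ∧ d ∈ F ∧ f a < f b ∧ f b < f c ∧ f c < f d := by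
  set N := F.image f with hN
  have hcard : N.card = F.card := Finset.card_image_of_injOn (fun a ha b hb => hinj a ha b hb)
  have hNne : N.Nonempty := Finset.card_pos.1 (by omega)
  set c4 := N.max' hNne with hc4
  set N3 := N.erase c4 with hN3s
  have hN3card : N3.card = N.card - 1 := Finset.card_erase_of_mem (N.max'_mem hNne)
  have h3 : 3 ≤ N3.card := by omega
  have hinj3 : ∀ a ∈ N3, ∀ b ∈ N3, id a = id b → a = b := fun a _ b _ hab => hab
  obtain ⟨c1, c2, c3, h1m, h2m, h3m, h12, h23⟩ := exists_sorted3 hinj3 h3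
  have hc3N : c3 ∈ N := Finset.mem_of_mem_erase h3m
  have h34 : c3 < c4 :=
    lt_of_le_of_ne (N.le_max' c3 hc3N) (Finset.ne_of_mem_erase h3m)
  obtain ⟨a, haF, hfa⟩ := Finset.mem_image.1 (Finset.mem_of_mem_erase h1m)
  obtain ⟨b, hbF, hfb⟩ := Finset.mem_image.1 (Finset.mem_of_mem_erase h2m)
  obtain ⟨c, hcF, hfc⟩ := Finset.mem_image.1 hc3N
  obtain ⟨d, hdF, hfd⟩ := Finset.mem_image.1 (N.max'_mem hNne)
  exact ⟨a, b, c, d, haF, hbF, hcF, hdF, by simp only [id] at h12 h23 h34; omega,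
    by simp only [id] at h12 h23 h34; omega, by simp only [id] at h12 h23 h34; omega⟩

theorem stmt_3 (n : ℕ) [NeZero n] (hn : 3 ≤ n) (H : Finset (Finset (ZMod n)))
    (hint : ∀ S ∈ H, IsCyclicInterval n S)
    (hempty : ∅ ∉ H) (hfull : (Finset.univ : Finset (ZMod n)) ∉ H)
    (hstar : ∀ A ∈ H, ∀ B ∈ H, ∀ C ∈ H, ∀ D ∈ H,
      A ≠ B → A ≠ C → A ≠ D → B ≠ C → B ≠ D → C ≠ D → ¬ (A ∪ B ⊆ C ∩ D)) :
    H.card ≤ 2 * n := by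
  classical
  have hn1 : 1 ≤ n := by omega
  -- representation
  have hrep : ∀ S ∈ H, S = arcSet n (lend S) S.card ∧ 1 ≤ S.card ∧ S.card ≤ n - 1 := by
    intro S hS
    obtain ⟨k, hk, h1, h2⟩ := cyclic_eq_arcSet (hint S hS)
      (by rintro rfl; exact hempty hS) (by rintro rfl; exact hfull hS)
    exact ⟨lend_spec ⟨k, hk⟩, h1, h2⟩
  set E : Finset (ZMod n) → ZMod n := fun S => lend S + ((S.card - 1 : ℕ) : ZMod n) with hEdef
  -- cast injectivity
  have hcastinj : ∀ a b : ℕ, a < n → b < n → (a : ZMod n) = (b : ZMod n) → a = b := by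
    intro a b ha hb hab
    have := congrArg ZMod.val hab
    rwa [ZMod.val_natCast, ZMod.val_natCast, Nat.mod_eq_of_lt ha, Nat.mod_eq_of_lt hb] at this
  -- same lend, same card ⇒ equal
  have heqL : ∀ S ∈ H, ∀ S' ∈ H, lend S = lend S' → S.card = S'.card → S = S' := by
    intro S hS S' hS' hl hc
    rw [(hrep S hS).1, (hrep S' hS').1, hl, hc]
  -- same E, same card ⇒ equal
  have heqE : ∀ S ∈ H, ∀ S' ∈ H, E S = E S' → S.card = S'.card → S = S' := by
    intro S hS S' hS' he hc
    apply heqL S hS S' hS' _ hc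
    simp only [hEdef, hc] at he
    exact add_right_cancel he
  -- E differs when lend equal, card differs
  have hEne : ∀ S ∈ H, ∀ S' ∈ H, lend S = lend S' → S.card ≠ S'.card → E S ≠ E S' := by
    intro S hS S' hS' hl hc he
    apply hc
    simp only [hEdef, hl] at he
    have := add_left_cancel he
    have h1 := (hrep S hS).2
    have h2 := (hrep S' hS').2
    have := hcastinj _ _ (by omega) (by omega) this
    omega
  -- lend differs when E equal, card differs
  have hLne : ∀ S ∈ H, ∀ S' ∈ H, E S = E S' → S.card ≠ S'.card → lend S ≠ lend S' := by
    intro S hS S' hS' he hc hl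
    apply hc
    simp only [hEdef, hl] at he
    have := add_left_cancel he
    have h1 := (hrep S hS).2
    have h2 := (hrep S' hS').2
    have := hcastinj _ _ (by omega) (by omega) this
    omega
  -- subset from same lend
  have hsubL : ∀ S ∈ H, ∀ S' ∈ H, lend S = lend S' → S.card ≤ S'.card → S ⊆ S' := by
    intro S hS S' hS' hl hc
    rw [(hrep S hS).1, (hrep S' hS').1, hl]
    exact arcSet_mono _ hc
  -- subset from same E
  have hsubE : ∀ S ∈ H, ∀ S' ∈ H, E S = E S' → S.card ≤ S'.card → S ⊆ S' := by
    intro S hS S' hS' he hc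
    rw [(hrep S hS).1, (hrep S' hS').1]
    exact arcSet_subset_end (hrep S hS).2.1 (by have := (hrep S' hS').2.2; omega) hc he
  -- card ne ⇒ set ne
  have hcne : ∀ (S S' : Finset (ZMod n)), S.card ≠ S'.card → S ≠ S' := by
    intro S S' h he; exact h (by rw [he])
  -- fibers of lend have ≤ 3 elements
  have hL3 : ∀ x : ZMod n, (H.filter (fun S => lend S = x)).card ≤ 3 := by
    intro x
    by_contra hcon
    have h4 : 4 ≤ (H.filter (fun S => lend S = x)).card := by omega
    have hinjc : ∀ a ∈ H.filter (fun S => lend S = x), ∀ b ∈ H.filter (fun S => lend S = x),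
        a.card = b.card → a = b := by
      intro a ha b hb hab
      rw [Finset.mem_filter] at ha hb
      exact heqL a ha.1 b hb.1 (ha.2.trans hb.2.symm) hab
    obtain ⟨A, B, C, D, hA, hB, hC, hD, h1, h2, h3⟩ := exists_sorted4 hinjc h4
    rw [Finset.mem_filter] at hA hB hC hD
    refine hstar A hA.1 B hB.1 C hC.1 D hD.1 (hcne _ _ (by omega)) (hcne _ _ (by omega))
      (hcne _ _ (by omega)) (hcne _ _ (by omega)) (hcne _ _ (by omega)) (hcne _ _ (by omega)) ?_
    apply Finset.union_subset <;> apply Finset.subset_inter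
    · exact hsubL A hA.1 C hC.1 (hA.2.trans hC.2.symm) (by omega)
    · exact hsubL A hA.1 D hD.1 (hA.2.trans hD.2.symm) (by omega)
    · exact hsubL B hB.1 C hC.1 (hB.2.trans hC.2.symm) (by omega)
    · exact hsubL B hB.1 D hD.1 (hB.2.trans hD.2.symm) (by omega)
  -- fibers of E have ≤ 3 elements
  have hE3 : ∀ y : ZMod n, (H.filter (fun S => E S = y)).card ≤ 3 := by
    intro y
    by_contra hcon
    have h4 : 4 ≤ (H.filter (fun S => E S = y)).card := by omega
    have hinjc : ∀ a ∈ H.filter (fun S => E S = y), ∀ b ∈ H.filter (fun S => E S = y),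
        a.card = b.card → a = b := by
      intro a ha b hb hab
      rw [Finset.mem_filter] at ha hb
      exact heqE a ha.1 b hb.1 (ha.2.trans hb.2.symm) hab
    obtain ⟨A, B, C, D, hA, hB, hC, hD, h1, h2, h3⟩ := exists_sorted4 hinjc h4
    rw [Finset.mem_filter] at hA hB hC hD
    refine hstar A hA.1 B hB.1 C hC.1 D hD.1 (hcne _ _ (by omega)) (hcne _ _ (by omega))
      (hcne _ _ (by omega)) (hcne _ _ (by omega)) (hcne _ _ (by omega)) (hcne _ _ (by omega)) ?_
    apply Finset.union_subset <;> apply Finset.subset_inter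
    · exact hsubE A hA.1 C hC.1 (hA.2.trans hC.2.symm) (by omega)
    · exact hsubE A hA.1 D hD.1 (hA.2.trans hD.2.symm) (by omega)
    · exact hsubE B hB.1 C hC.1 (hB.2.trans hC.2.symm) (by omega)
    · exact hsubE B hB.1 D hD.1 (hB.2.trans hD.2.symm) (by omega)
  -- middle arc of a 3-fiber of lend: its E-fiber is a singleton
  have hmid : ∀ x : ZMod n, 3 ≤ (H.filter (fun S => lend S = x)).card →
      ∃ S, S ∈ H ∧ lend S = x ∧ (H.filter (fun J => E J = E S)).card = 1 := by
    intro x h3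
    have hinjc : ∀ a ∈ H.filter (fun S => lend S = x), ∀ b ∈ H.filter (fun S => lend S = x),
        a.card = b.card → a = b := by
      intro a ha b hb hab
      rw [Finset.mem_filter] at ha hb
      exact heqL a ha.1 b hb.1 (ha.2.trans hb.2.symm) hab
    obtain ⟨I1, I2, I3, h1, h2, h3m, h12, h23⟩ := exists_sorted3 hinjc h3
    rw [Finset.mem_filter] at h1 h2 h3m
    refine ⟨I2, h2.1, h2.2, ?_⟩
    have hone : H.filter (fun J => E J = E I2) = {I2} := by
      apply Finset.eq_singleton_iff_unique_mem.2
      refine ⟨Finset.mem_filter.2 ⟨h2.1, rfl⟩, ?_⟩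
      intro J hJ
      rw [Finset.mem_filter] at hJ
      obtain ⟨hJH, hJE⟩ := hJ
      by_contra hne
      have hLL : lend I1 = lend I2 := h1.2.trans h2.2.symm
      have hLL' : lend I2 = lend I3 := h2.2.trans h3m.2.symm
      have hE12 : E I1 ≠ E I2 := hEne I1 h1.1 I2 h2.1 hLL (by omega)
      have hE32 : E I3 ≠ E I2 := hEne I3 h3m.1 I2 h2.1 hLL'.symm (by omega)
      rcases le_total J.card I2.card with hle | hle
      · -- J ⊆ I2 : star with (I1, J, I2, I3)
        refine hstar I1 h1.1 J hJH I2 h2.1 I3 h3m.1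
          (by rintro rfl; exact hE12 hJE) (hcne _ _ (by omega)) (hcne _ _ (by omega))
          hne (by rintro rfl; exact hE32 hJE) (hcne _ _ (by omega)) ?_
        apply Finset.union_subset <;> apply Finset.subset_inter
        · exact hsubL I1 h1.1 I2 h2.1 (h1.2.trans h2.2.symm) (by omega)
        · exact hsubL I1 h1.1 I3 h3m.1 (h1.2.trans h3m.2.symm) (by omega)
        · exact hsubE J hJH I2 h2.1 hJE hle
        · exact Finset.Subset.trans (hsubE J hJH I2 h2.1 hJE hle)
            (hsubL I2 h2.1 I3 h3m.1 hLL' (by omega))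
      · -- I2 ⊆ J : star with (I1, I2, J, I3)
        refine hstar I1 h1.1 I2 h2.1 J hJH I3 h3m.1
          (hcne _ _ (by omega)) (by rintro rfl; exact hE12 hJE) (hcne _ _ (by omega))
          (fun h => hne h.symm) (hcne _ _ (by omega)) (by rintro rfl; exact hE32 hJE) ?_
        apply Finset.union_subset <;> apply Finset.subset_inter
        · exact Finset.Subset.trans (hsubL I1 h1.1 I2 h2.1 (h1.2.trans h2.2.symm) (by omega))
            (hsubE I2 h2.1 J hJH hJE.symm hle)
        · exact hsubL I1 h1.1 I3 h3m.1 (h1.2.trans h3m.2.symm) (by omega)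
        · exact hsubE I2 h2.1 J hJH hJE.symm hle
        · exact hsubL I2 h2.1 I3 h3m.1 hLL' (by omega)
    rw [hone, Finset.card_singleton]
  -- middle arc of a 3-fiber of E: its lend-fiber is a singleton
  have hmid' : ∀ y : ZMod n, 3 ≤ (H.filter (fun S => E S = y)).card →
      ∃ S, S ∈ H ∧ E S = y ∧ (H.filter (fun J => lend J = lend S)).card = 1 := by
    intro y h3
    have hinjc : ∀ a ∈ H.filter (fun S => E S = y), ∀ b ∈ H.filter (fun S => E S = y),
        a.card = b.card → a = b := by
      intro a ha b hb hab
      rw [Finset.mem_filter] at ha hb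
      exact heqE a ha.1 b hb.1 (ha.2.trans hb.2.symm) hab
    obtain ⟨I1, I2, I3, h1, h2, h3m, h12, h23⟩ := exists_sorted3 hinjc h3
    rw [Finset.mem_filter] at h1 h2 h3m
    refine ⟨I2, h2.1, h2.2, ?_⟩
    have hone : H.filter (fun J => lend J = lend I2) = {I2} := by
      apply Finset.eq_singleton_iff_unique_mem.2
      refine ⟨Finset.mem_filter.2 ⟨h2.1, rfl⟩, ?_⟩
      intro J hJ
      rw [Finset.mem_filter] at hJ
      obtain ⟨hJH, hJL⟩ := hJ
      by_contra hne
      have hEE : E I1 = E I2 := h1.2.trans h2.2.symm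
      have hEE' : E I2 = E I3 := h2.2.trans h3m.2.symm
      have hL12 : lend I1 ≠ lend I2 := hLne I1 h1.1 I2 h2.1 hEE (by omega)
      have hL32 : lend I3 ≠ lend I2 := hLne I3 h3m.1 I2 h2.1 hEE'.symm (by omega)
      rcases le_total J.card I2.card with hle | hle
      · -- J ⊆ I2 : star with (I1, J, I2, I3)
        refine hstar I1 h1.1 J hJH I2 h2.1 I3 h3m.1
          (by rintro rfl; exact hL12 hJL) (hcne _ _ (by omega)) (hcne _ _ (by omega))
          hne (by rintro rfl; exact hL32 hJL) (hcne _ _ (by omega)) ?_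
        apply Finset.union_subset <;> apply Finset.subset_inter
        · exact hsubE I1 h1.1 I2 h2.1 hEE (by omega)
        · exact hsubE I1 h1.1 I3 h3m.1 (h1.2.trans h3m.2.symm) (by omega)
        · exact hsubL J hJH I2 h2.1 hJL hle
        · exact Finset.Subset.trans (hsubL J hJH I2 h2.1 hJL hle)
            (hsubE I2 h2.1 I3 h3m.1 hEE' (by omega))
      · -- I2 ⊆ J : star with (I1, I2, J, I3)
        refine hstar I1 h1.1 I2 h2.1 J hJH I3 h3m.1
          (hcne _ _ (by omega)) (by rintro rfl; exact hL12 hJL) (hcne _ _ (by omega))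
          (fun h => hne h.symm) (hcne _ _ (by omega)) (by rintro rfl; exact hL32 hJL) ?_
        apply Finset.union_subset <;> apply Finset.subset_inter
        · exact Finset.Subset.trans (hsubE I1 h1.1 I2 h2.1 hEE (by omega))
            (hsubL I2 h2.1 J hJH hJL.symm hle)
        · exact hsubE I1 h1.1 I3 h3m.1 (h1.2.trans h3m.2.symm) (by omega)
        · exact hsubL I2 h2.1 J hJH hJL.symm hle
        · exact hsubE I2 h2.1 I3 h3m.1 hEE' (by omega)
    rw [hone, Finset.card_singleton]
  -- counting
  set kk : ZMod n → ℕ := fun x => (H.filter (fun S => lend S = x)).card with hkk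
  set mm : ZMod n → ℕ := fun y => (H.filter (fun S => E S = y)).card with hmm
  have hsumk : H.card = ∑ x : ZMod n, kk x :=
    Finset.card_eq_sum_card_fiberwise (fun S _ => Finset.mem_univ (lend S))
  have hsumm : H.card = ∑ y : ZMod n, mm y :=
    Finset.card_eq_sum_card_fiberwise (fun S _ => Finset.mem_univ (E S))
  set T : Finset (ZMod n) := Finset.univ.filter (fun x => 3 ≤ kk x) with hT
  set T' : Finset (ZMod n) := Finset.univ.filter (fun y => 3 ≤ mm y) with hT'
  set U1 : Finset (ZMod n) := Finset.univ.filter (fun x => kk x ≤ 1) with hU1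
  set U1' : Finset (ZMod n) := Finset.univ.filter (fun y => mm y ≤ 1) with hU1'
  have hcardZ : Fintype.card (ZMod n) = n := ZMod.card n
  -- pointwise inequality summed: H.card + U1.card ≤ 2 * n + T.card
  have hchain1 : H.card + U1.card ≤ 2 * n + T.card := by
    have hpt : ∀ x : ZMod n, kk x + (if kk x ≤ 1 then 1 else 0)
        ≤ 2 + (if 3 ≤ kk x then 1 else 0) := by
      intro x
      have h : kk x ≤ 3 := by rw [hkk]; exact hL3 x
      split_ifs <;> omega
    calc H.card + U1.card
        = ∑ x : ZMod n, (kk x + (if kk x ≤ 1 then 1 else 0)) := by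
          rw [Finset.sum_add_distrib, ← hsumk, hU1, Finset.card_filter]
      _ ≤ ∑ x : ZMod n, (2 + (if 3 ≤ kk x then 1 else 0)) :=
          Finset.sum_le_sum (fun x _ => hpt x)
      _ = 2 * n + T.card := by
          rw [Finset.sum_add_distrib, Finset.sum_const, Finset.card_univ, hcardZ,
            hT, Finset.card_filter, smul_eq_mul]
          ring
  have hchain2 : H.card + U1'.card ≤ 2 * n + T'.card := by
    have hpt : ∀ y : ZMod n, mm y + (if mm y ≤ 1 then 1 else 0)
        ≤ 2 + (if 3 ≤ mm y then 1 else 0) := by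
      intro y
      have h : mm y ≤ 3 := by rw [hmm]; exact hE3 y
      split_ifs <;> omega
    calc H.card + U1'.card
        = ∑ y : ZMod n, (mm y + (if mm y ≤ 1 then 1 else 0)) := by
          rw [Finset.sum_add_distrib, ← hsumm, hU1', Finset.card_filter]
      _ ≤ ∑ y : ZMod n, (2 + (if 3 ≤ mm y then 1 else 0)) :=
          Finset.sum_le_sum (fun y _ => hpt y)
      _ = 2 * n + T'.card := by
          rw [Finset.sum_add_distrib, Finset.sum_const, Finset.card_univ, hcardZ,
            hT', Finset.card_filter, smul_eq_mul]
          ring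
  -- injection T → U1'
  have hTU : T.card ≤ U1'.card := by
    have hg : ∀ x : ZMod n, x ∈ T → ∃ S, S ∈ H ∧ lend S = x ∧ (H.filter (fun J => E J = E S)).card = 1 := by
      intro x hx
      rw [hT, Finset.mem_filter] at hx
      exact hmid x hx.2
    classical
    set g : ZMod n → ZMod n := fun x =>
      if h : ∃ S, S ∈ H ∧ lend S = x ∧ (H.filter (fun J => E J = E S)).card = 1
      then E h.choose else 0 with hgdef
    apply Finset.card_le_card_of_injOn g
    · intro x hx
      have hex := hg x hx
      have hgx : g x = E hex.choose := by rw [hgdef]; exact dif_pos hex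
      obtain ⟨hSH, hSL, hS1⟩ := hex.choose_spec
      simp only [hU1', Finset.mem_coe, Finset.mem_filter]
      refine ⟨Finset.mem_univ _, ?_⟩
      rw [hmm, hgx]
      exact le_of_eq hS1
    · intro x hx x' hx' hgg
      have hex := hg x hx
      have hex' := hg x' hx'
      have hgx : g x = E hex.choose := by rw [hgdef]; exact dif_pos hex
      have hgx' : g x' = E hex'.choose := by rw [hgdef]; exact dif_pos hex'
      obtain ⟨hSH, hSL, hS1⟩ := hex.choose_spec
      obtain ⟨hSH', hSL', hS1'⟩ := hex'.choose_spec
      have hEeq : E hex.choose = E hex'.choose := by rw [← hgx, ← hgx', hgg]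
      -- both belong to the E-fiber of E hex.choose which has card 1
      have hmem : hex.choose ∈ H.filter (fun J => E J = E hex.choose) :=
        Finset.mem_filter.2 ⟨hSH, rfl⟩
      have hmem' : hex'.choose ∈ H.filter (fun J => E J = E hex.choose) :=
        Finset.mem_filter.2 ⟨hSH', hEeq.symm⟩
      have := Finset.card_le_one.1 (le_of_eq hS1) _ hmem' _ hmem
      rw [← hSL, ← hSL', this]
  -- injection T' → U1
  have hTU' : T'.card ≤ U1.card := by
    have hg : ∀ y : ZMod n, y ∈ T' → ∃ S, S ∈ H ∧ E S = y ∧ (H.filter (fun J => lend J = lend S)).card = 1 := by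
      intro y hy
      rw [hT', Finset.mem_filter] at hy
      exact hmid' y hy.2
    classical
    set g : ZMod n → ZMod n := fun y =>
      if h : ∃ S, S ∈ H ∧ E S = y ∧ (H.filter (fun J => lend J = lend S)).card = 1
      then lend h.choose else 0 with hgdef
    apply Finset.card_le_card_of_injOn g
    · intro y hy
      have hex := hg y hy
      have hgy : g y = lend hex.choose := by rw [hgdef]; exact dif_pos hex
      obtain ⟨hSH, hSE, hS1⟩ := hex.choose_spec
      simp only [hU1, Finset.mem_coe, Finset.mem_filter]
      refine ⟨Finset.mem_univ _, ?_⟩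
      rw [hkk, hgy]
      exact le_of_eq hS1
    · intro y hy y' hy' hgg
      have hex := hg y hy
      have hex' := hg y' hy'
      have hgy : g y = lend hex.choose := by rw [hgdef]; exact dif_pos hex
      have hgy' : g y' = lend hex'.choose := by rw [hgdef]; exact dif_pos hex'
      obtain ⟨hSH, hSE, hS1⟩ := hex.choose_spec
      obtain ⟨hSH', hSE', hS1'⟩ := hex'.choose_spec
      have hLeq : lend hex.choose = lend hex'.choose := by rw [← hgy, ← hgy', hgg]
      have hmem : hex.choose ∈ H.filter (fun J => lend J = lend hex.choose) :=
        Finset.mem_filter.2 ⟨hSH, rfl⟩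
      have hmem' : hex'.choose ∈ H.filter (fun J => lend J = lend hex.choose) :=
        Finset.mem_filter.2 ⟨hSH', hLeq.symm⟩
      have := Finset.card_le_one.1 (le_of_eq hS1) _ hmem' _ hmem
      rw [← hSE, ← hSE', this]
  omega
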